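/- Let R be a commutative ring, n a positive integer, and A ∈ Mₙ(R). Set T := fromBlocks 0 A (−A^⋆) 0, a 2n×2n matrix. Then the characteristic polynomial of T equals f composed with X², i.e. charpoly(T) = f.comp(X²), where f := charpoly(−A·A^⋆). -/

import Mathlib

open Polynomial Matrix

/-- The `n × n` antidiagonal permutation matrix `J`: with 1-based indexing,
`J i j = 1` if `i + j = n + 1` and `0` otherwise. -/
def antidiagJ (R : Type*) [CommRing R] (n : ℕ) : Matrix (Fin n) (Fin n) R :=
  Matrix.of fun i j => if (i : ℕ) + (j : ℕ) + 2 = n + 1 then 1 else 0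

/-- The reflection `M^⋆ = J * Mᵀ * J` of a square matrix about its antidiagonal. -/
def astar {R : Type*} [CommRing R] {n : ℕ} (M : Matrix (Fin n) (Fin n) R) :
    Matrix (Fin n) (Fin n) R :=
  antidiagJ R n * Mᵀ * antidiagJ R n

/-- For `T = fromBlocks 0 A (−A^⋆) 0`, the characteristic polynomial of `T` is
`f(X²)` where `f` is the characteristic polynomial of `−A·A^⋆`. -/
lemma scalar_eq_smul_one' {R : Type*} [CommRing R] {n : ℕ} (r : R) :
    Matrix.scalar (Fin n) r = r • (1 : Matrix (Fin n) (Fin n) R) := by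
  rw [smul_one_eq_diagonal]; rfl

lemma comp_X_sq_eq_det {R : Type*} [CommRing R] {n : ℕ} (B : Matrix (Fin n) (Fin n) R) :
    (-B).charpoly.comp (X ^ 2) =
      ((X ^ 2 : R[X]) • (1 : Matrix (Fin n) (Fin n) R[X]) + B.map C).det := by
  have h1 : (-B).charpoly = ((X : R[X]) • (1 : Matrix (Fin n) (Fin n) R[X]) + B.map C).det := by
    rw [charpoly, charmatrix, scalar_eq_smul_one']
    congr 1
    ext i j
    simp [sub_eq_add_neg, Matrix.map_apply]
  rw [h1]
  have h2 : ∀ p : R[X], p.comp (X ^ 2) = eval₂RingHom (C : R →+* R[X]) (X ^ 2) p := fun p => rfl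
  rw [h2, RingHom.map_det]
  congr 1
  ext i j
  simp [Matrix.map_apply, Matrix.one_apply, apply_ite, mul_ite]

theorem charpoly_fromBlocks_eq_comp (R : Type*) [CommRing R] (n : ℕ) (hn : 0 < n)
    (A : Matrix (Fin n) (Fin n) R) :
    (Matrix.fromBlocks 0 A (-(astar A)) 0).charpoly =
      (-(A * astar A)).charpoly.comp (Polynomial.X ^ 2) := by
  classical
  set S := Localization.Away (X : R[X]) with hS
  let φ : R[X] →+* S := algebraMap R[X] S
  have hXreg : (X : R[X]) ∈ nonZeroDivisors R[X] := by
    rw [mem_nonZeroDivisors_iff_right]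
    intro p hp
    ext k
    have := congrArg (fun q => Polynomial.coeff q (k + 1)) hp
    simpa [Polynomial.coeff_mul_X] using this
  have hinj : Function.Injective φ :=
    IsLocalization.injective S (Submonoid.powers_le.mpr hXreg)
  apply hinj
  set c : S := φ (X : R[X]) with hc
  have hcu : IsUnit c := IsLocalization.map_units S ⟨X, Submonoid.mem_powers _⟩
  letI ic : Invertible c := hcu.invertible
  letI icm : Invertible (c • (1 : Matrix (Fin n) (Fin n) S)) :=
    ⟨⅟c • 1, by rw [smul_mul_smul_comm, invOf_mul_self, one_mul, one_smul], by
      rw [smul_mul_smul_comm, mul_invOf_self, one_mul, one_smul]⟩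
  have hinv : ⅟(c • (1 : Matrix (Fin n) (Fin n) S)) = ⅟c • 1 := rfl
  set a : Matrix (Fin n) (Fin n) S := (A.map C).map φ with ha
  set b : Matrix (Fin n) (Fin n) S := ((astar A).map C).map φ with hb
  have hLHS : φ ((Matrix.fromBlocks 0 A (-(astar A)) 0).charpoly)
      = (c ^ 2 • (1 : Matrix (Fin n) (Fin n) S) + a * b).det := by
    rw [charpoly, RingHom.map_det, charmatrix_fromBlocks, RingHom.mapMatrix_apply]
    have e1 : (charmatrix (0 : Matrix (Fin n) (Fin n) R)).map φ
        = c • (1 : Matrix (Fin n) (Fin n) S) := by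
      rw [charmatrix, scalar_eq_smul_one']
      ext i j
      simp [Matrix.map_apply, Matrix.one_apply, apply_ite φ, mul_ite, hc]
    have e2 : ((-(A.map C)).map φ) = -a := by
      ext i j; simp [ha, Matrix.map_apply]
    have e3 : ((-((-(astar A)).map C)).map φ) = b := by
      ext i j; simp [hb, Matrix.map_apply]
    rw [Matrix.fromBlocks_map, e1, e2, e3, Matrix.det_fromBlocks₂₂]
    have key : c • (1 : Matrix (Fin n) (Fin n) S) - (-a) * ⅟(c • 1) * b
        = ⅟c • (c ^ 2 • (1 : Matrix (Fin n) (Fin n) S) + a * b) := by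
      rw [hinv, Matrix.mul_smul, Matrix.smul_mul, Matrix.mul_one, Matrix.neg_mul, smul_neg,
        sub_neg_eq_add, smul_add, smul_smul]
      congr 1
      rw [pow_two, ← mul_assoc, invOf_mul_self, one_mul]
    rw [key, Matrix.det_smul, Matrix.det_smul, Matrix.det_one, mul_one, ← mul_assoc,
      ← mul_pow, mul_invOf_self, one_pow, one_mul]
  have eB : ((A * astar A).map C).map φ = a * b := by
    rw [Matrix.map_mul, Matrix.map_mul]
  have eX : (((X ^ 2 : R[X]) • (1 : Matrix (Fin n) (Fin n) R[X])).map φ)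
      = c ^ 2 • (1 : Matrix (Fin n) (Fin n) S) := by
    ext i j
    simp [Matrix.map_apply, Matrix.one_apply, apply_ite φ, mul_ite, hc]
  rw [hLHS, comp_X_sq_eq_det, RingHom.map_det, RingHom.mapMatrix_apply,
    Matrix.map_add _ (map_add φ), eX, eB]
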